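/- For any q = 2^m, each of the matrices B_b (b ∈ F_q ∪ {∞}) built from the (q+1,q)-net and the permuted Hadamard matrix is orthogonal (its columns form an orthonormal basis of R^{q²}), and for b ≠ c every pair of columns φ from B_b and ψ from B_c satisfies |⟨φ, ψ⟩| = 1/q; i.e., {B_b} is a set of q+1 mutually unbiased bases of R^{q²}. -/
import Mathlib


lemma sum_ite_pull {α : Type*} [Fintype α] (P : Prop) [Decidable P] (f : α → ℝ) :
    (∑ x : α, if P then f x else 0) = if P then ∑ x : α, f x else 0 := by
  split_ifs <;> simp

/-- The bases `B_b` (`b ∈ F_q ∪ {∞}`) built from the `(q+1,q)`-net and a real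
Hadamard matrix `H̃` of order `q` form `q+1` mutually unbiased orthonormal bases of
`R^{q²}`: each `B_b` has orthonormal columns, and columns from different bases have
inner products of absolute value `1/q = 1/√(q²)`. -/
theorem mub_construction (m : ℕ) (hm : 0 < m)
    (F : Type) [Field F] [Fintype F] [DecidableEq F]
    (hF : Fintype.card F = 2 ^ m)
    (Ht : F → F → ℝ)
    (hent : ∀ u v : F, Ht u v = 1 ∨ Ht u v = -1)
    (horth : ∀ v v' : F, v ≠ v' → ∑ u : F, Ht u v * Ht u v' = 0) :
    let q : ℝ := Fintype.card F
    let B : Option F → (F × F) → (F × F) → ℝ := fun b p c =>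
      match b with
      | some b => if p.2 = b * p.1 + c.1 then Ht p.1 c.2 / Real.sqrt q else 0
      | none => if p.1 = c.1 then Ht p.2 c.2 / Real.sqrt q else 0
    (∀ b : Option F, ∀ c c' : F × F,
      (∑ p : F × F, B b p c * B b p c') = if c = c' then 1 else 0) ∧
    (∀ b b' : Option F, b ≠ b' → ∀ c c' : F × F,
      |∑ p : F × F, B b p c * B b' p c'| = 1 / q) := by
  intro q B
  have hq0 : (0:ℝ) < q := by
    have : 0 < Fintype.card F := Fintype.card_pos
    unfold q
    exact_mod_cast this
  have hsq : Real.sqrt q * Real.sqrt q = q := Real.mul_self_sqrt hq0.le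
  have hdiv : ∀ a b : ℝ, a / Real.sqrt q * (b / Real.sqrt q) = a * b / q := by
    intro a b; rw [div_mul_div_comm, hsq]
  have hone : ∀ u v : F, Ht u v * Ht u v = 1 := by
    intro u v; rcases hent u v with h | h <;> rw [h] <;> ring
  have habs : ∀ u v : F, |Ht u v| = 1 := by
    intro u v; rcases hent u v with h | h <;> rw [h] <;> simp
  have hsum_self : ∀ v : F, ∑ u : F, Ht u v * Ht u v = q := by
    intro v
    simp only [hone, Finset.sum_const, Finset.card_univ, nsmul_eq_mul, mul_one, q]
  constructor
  · intro b c c'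
    cases b with
    | some b =>
      simp only [B]
      rw [Fintype.sum_prod_type]
      simp only [ite_mul, mul_ite, zero_mul, mul_zero, Finset.sum_ite_eq',
        Finset.mem_univ, if_true, add_right_inj]
      by_cases h1 : c.1 = c'.1
      · simp only [h1, if_true]
        by_cases h2 : c.2 = c'.2
        · have hcc : c = c' := Prod.ext h1 h2
          simp only [hcc, if_true, hdiv]
          rw [← Finset.sum_div, hsum_self, div_self hq0.ne']
        · have hcc : c ≠ c' := fun h => h2 (by rw [h])
          simp only [hcc, if_false, hdiv]
          rw [← Finset.sum_div, horth _ _ h2, zero_div]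
      · have hcc : c ≠ c' := fun h => h1 (by rw [h])
        have h1' : ¬ c'.1 = c.1 := fun h => h1 h.symm
        simp [h1', hcc]
    | none =>
      simp only [B]
      rw [Fintype.sum_prod_type_right]
      simp only [ite_mul, mul_ite, zero_mul, mul_zero, Finset.sum_ite_eq',
        Finset.mem_univ, if_true]
      by_cases h1 : c.1 = c'.1
      · simp only [h1, if_true]
        by_cases h2 : c.2 = c'.2
        · have hcc : c = c' := Prod.ext h1 h2
          simp only [hcc, if_true, hdiv]
          rw [← Finset.sum_div]
          rw [show ∑ w : F, Ht w c'.2 * Ht w c'.2 = q from hsum_self _, div_self hq0.ne']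
        · have hcc : c ≠ c' := fun h => h2 (by rw [h])
          simp only [hcc, if_false, hdiv]
          rw [← Finset.sum_div, horth _ _ h2, zero_div]
      · have hcc : c ≠ c' := fun h => h1 (by rw [h])
        have h1' : ¬ c'.1 = c.1 := fun h => h1 h.symm
        simp [h1', hcc]
  · intro b b' hbb c c'
    have habs_term : ∀ u w : F, |Ht u c.2 * Ht w c'.2 / q| = 1 / q := by
      intro u w
      rw [abs_div, abs_mul, habs, habs, abs_of_pos hq0, one_mul]
    match b, b' with
    | some b, some b' =>
      have hb : b ≠ b' := fun h => hbb (by rw [h])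
      have hiff : ∀ u : F, (b' * u + c'.1 = b * u + c.1) ↔ u = (c'.1 - c.1) / (b - b') := by
        intro u
        rw [eq_div_iff (sub_ne_zero.mpr hb)]
        constructor <;> intro h <;> linear_combination -h
      simp only [B]
      rw [Fintype.sum_prod_type]
      simp only [ite_mul, mul_ite, zero_mul, mul_zero, Finset.sum_ite_eq',
        Finset.mem_univ, if_true, hiff, hdiv]
      exact habs_term _ _
    | some b, none =>
      simp only [B]
      rw [Fintype.sum_prod_type]
      simp only [ite_mul, mul_ite, zero_mul, mul_zero, sum_ite_pull,
        Finset.sum_const_zero, Finset.sum_ite_eq', Finset.mem_univ, if_true, hdiv]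
      exact habs_term _ _
    | none, some b' =>
      simp only [B]
      rw [Fintype.sum_prod_type]
      simp only [ite_mul, mul_ite, zero_mul, mul_zero, sum_ite_pull,
        Finset.sum_const_zero, Finset.sum_ite_eq', Finset.mem_univ, if_true, hdiv]
      exact habs_term _ _
    | none, none => exact absurd rfl hbb
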